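/- Inserting a zero value stutters the running ISS: let x be a d-dimensional real time series of length T, let 1 ≤ t_0 ≤ T+1, and let y be the time series of length T+1 with y_i = x_i for i < t_0, y_{t_0} = 0 ∈ ℝ^d, and y_i = x_{i−1} for i > t_0. Then for every word w (all of whose letters have at least one nonzero entry) and every 1 ≤ s ≤ T+1: Itsum_w(y)_s = Itsum_w(x)_s if s < t_0, and Itsum_w(y)_s = Itsum_w(x)_{s−1} if s ≥ t_0. -/

import Mathlib

/-- The monomial `x_t^{[a]} = ∏_j (x_t^{(j)})^{a_j}`. -/
def mono {d : ℕ} (x : ℕ → Fin d → ℝ) (t : ℕ) (a : Fin d → ℕ) : ℝ :=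
  ∏ j, (x t j) ^ (a j)

/-- The running ISS `Itsum_w(x)_t = ∑_{s < t_1 < ⋯ < t_p ≤ t} x_{t_1}^{[a_1]} ⋯ x_{t_p}^{[a_p]}`
(with starting point `s`; the paper's `Itsum_w(x)_t` is `iss x w 0 t`). -/
def iss {d : ℕ} (x : ℕ → Fin d → ℝ) : List (Fin d → ℕ) → ℕ → ℕ → ℝ
  | [], _, _ => 1
  | a :: w, s, t => ∑ i ∈ Finset.Ioc s t, mono x i a * iss x w i t

lemma mono_congr {d : ℕ} {x y : ℕ → Fin d → ℝ} {t t' : ℕ} (h : y t = x t')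
    (a : Fin d → ℕ) : mono y t a = mono x t' a := by
  unfold mono; rw [h]

lemma mono_zero {d : ℕ} {y : ℕ → Fin d → ℝ} {t : ℕ} (h : y t = 0)
    {a : Fin d → ℕ} (ha : ∃ j, a j ≠ 0) : mono y t a = 0 := by
  obtain ⟨j, hj⟩ := ha
  exact Finset.prod_eq_zero (Finset.mem_univ j) (by simp [h, zero_pow hj])

lemma sum_Ioc_shift (f : ℕ → ℝ) (u s : ℕ) :
    ∑ i ∈ Finset.Ioc (u + 1) (s + 1), f i = ∑ j ∈ Finset.Ioc u s, f (j + 1) := by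
  rw [show Finset.Ioc (u + 1) (s + 1)
      = Finset.map ⟨fun j => j + 1, fun a b h => by simpa using h⟩ (Finset.Ioc u s) from ?_,
    Finset.sum_map]
  · rfl
  ext i
  simp only [Finset.mem_Ioc, Finset.mem_map, Function.Embedding.coeFn_mk]
  constructor
  · rintro ⟨h1, h2⟩; exact ⟨i - 1, ⟨by omega, by omega⟩, by show i - 1 + 1 = i; omega⟩
  · rintro ⟨j, hj, rfl⟩; show u + 1 < j + 1 ∧ j + 1 ≤ s + 1; omega

lemma iss_aux {d : ℕ} (x y : ℕ → Fin d → ℝ) (m : ℕ)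
    (hy_lt : ∀ i, i < m + 1 → y i = x i)
    (hy_eq : y (m + 1) = 0)
    (hy_gt : ∀ i, m + 1 < i → y i = x (i - 1)) :
    ∀ w : List (Fin d → ℕ), (∀ a ∈ w, ∃ j, a j ≠ 0) → ∀ u s : ℕ,
      (s < m + 1 → iss y w u s = iss x w u s) ∧
      (m + 1 ≤ s → u < m + 1 → iss y w u s = iss x w u (s - 1)) ∧
      (m + 1 ≤ s → m + 1 ≤ u → iss y w u s = iss x w (u - 1) (s - 1)) := by
  intro w
  induction w with
  | nil => exact fun _ u s => ⟨fun _ => rfl, fun _ _ => rfl, fun _ _ => rfl⟩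
  | cons a w ih =>
    intro hl u s
    have ha : ∃ j, a j ≠ 0 := hl a List.mem_cons_self
    have hw : ∀ b ∈ w, ∃ j, b j ≠ 0 := fun b hb => hl b (List.mem_cons_of_mem a hb)
    refine ⟨?_, ?_, ?_⟩
    · intro hs
      simp only [iss]
      refine Finset.sum_congr rfl fun i hi => ?_
      rw [Finset.mem_Ioc] at hi
      rw [mono_congr (hy_lt i (by omega)) a, (ih hw i s).1 hs]
    · intro hs hu
      obtain ⟨n, rfl⟩ : ∃ n, s = n + 1 := ⟨s - 1, by omega⟩
      have hmn : m ≤ n := by omega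
      simp only [iss, Nat.add_sub_cancel]
      rw [← Finset.sum_Ioc_consecutive _ (show u ≤ m + 1 by omega)
            (show m + 1 ≤ n + 1 by omega),
          ← Finset.sum_Ioc_consecutive (fun i => mono x i a * iss x w i n)
            (show u ≤ m by omega) hmn,
          Finset.sum_Ioc_succ_top (show u ≤ m by omega)]
      have h0 : mono y (m + 1) a * iss y w (m + 1) (n + 1) = 0 := by
        rw [mono_zero hy_eq ha, zero_mul]
      rw [h0, add_zero]
      congr 1
      · refine Finset.sum_congr rfl fun i hi => ?_
        rw [Finset.mem_Ioc] at hi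
        rw [mono_congr (hy_lt i (by omega)) a,
          (ih hw i (n + 1)).2.1 (by omega) (by omega), Nat.add_sub_cancel]
      · rw [sum_Ioc_shift]
        refine Finset.sum_congr rfl fun j hj => ?_
        rw [Finset.mem_Ioc] at hj
        have h1 : y (j + 1) = x j := by
          rw [hy_gt (j + 1) (by omega)]; simp
        rw [mono_congr h1 a, (ih hw (j + 1) (n + 1)).2.2 (by omega) (by omega)]
        simp
    · intro hs hu
      obtain ⟨n, rfl⟩ : ∃ n, s = n + 1 := ⟨s - 1, by omega⟩
      obtain ⟨v, rfl⟩ : ∃ v, u = v + 1 := ⟨u - 1, by omega⟩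
      simp only [iss, Nat.add_sub_cancel]
      rw [sum_Ioc_shift]
      refine Finset.sum_congr rfl fun j hj => ?_
      rw [Finset.mem_Ioc] at hj
      have h1 : y (j + 1) = x j := by
        rw [hy_gt (j + 1) (by omega)]; simp
      rw [mono_congr h1 a, (ih hw (j + 1) (n + 1)).2.2 (by omega) (by omega)]
      simp

/-- Inserting a zero value stutters the running ISS: if `y` of length `T+1` is
obtained from `x` of length `T` by inserting `0 ∈ ℝ^d` at position `t_0`
(`1 ≤ t_0 ≤ T+1`), then for every word `w` all of whose letters have at least one
nonzero entry and every `1 ≤ s ≤ T+1`: `Itsum_w(y)_s = Itsum_w(x)_s` if `s < t_0`,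
and `Itsum_w(y)_s = Itsum_w(x)_{s−1}` if `s ≥ t_0`. -/
theorem iss_zero_insertion_stutters {d T : ℕ} (x y : ℕ → Fin d → ℝ) (t₀ : ℕ)
    (ht₀1 : 1 ≤ t₀) (ht₀2 : t₀ ≤ T + 1)
    (hy_lt : ∀ i, i < t₀ → y i = x i)
    (hy_eq : y t₀ = 0)
    (hy_gt : ∀ i, t₀ < i → y i = x (i - 1))
    (w : List (Fin d → ℕ)) (hletters : ∀ a ∈ w, ∃ j, a j ≠ 0)
    (s : ℕ) (hs1 : 1 ≤ s) (hs2 : s ≤ T + 1) :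
    (s < t₀ → iss y w 0 s = iss x w 0 s) ∧
    (t₀ ≤ s → iss y w 0 s = iss x w 0 (s - 1)) := by
  obtain ⟨m, rfl⟩ : ∃ m, t₀ = m + 1 := ⟨t₀ - 1, by omega⟩
  have h := iss_aux x y m hy_lt hy_eq hy_gt w hletters 0 s
  exact ⟨h.1, fun hts => h.2.1 hts (by omega)⟩
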